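/- Let G be a group and let L be a finitely generated subgroup of G such that every element of L has finite conjugacy class in G. Then L is virtually abelian: L contains an abelian subgroup of finite index in L. -/

import Mathlib

/-- The centralizer of an element with finite conjugacy class has finite index. -/
lemma centralizer_finiteIndex_of_fc {G : Type*} [Group G] (g : G)
    (h : Set.Finite {h : G | ∃ x : G, x * g * x⁻¹ = h}) :
    (Subgroup.centralizer {g}).FiniteIndex := by
  constructor
  rw [Subgroup.centralizer_eq_comap_stabilizer]
  erw [Subgroup.index_comap_of_surjective (f := ConjAct.toConjAct.toMonoidHom) _
      ConjAct.toConjAct.surjective]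
  erw [MulAction.index_stabilizer]
  have horb : MulAction.orbit (ConjAct G) g ⊆ {h : G | ∃ x : G, x * g * x⁻¹ = h} := by
    rintro - ⟨m, rfl⟩
    exact ⟨ConjAct.ofConjAct m, (ConjAct.smul_def m g).symm⟩
  have hfin : (MulAction.orbit (ConjAct G) g).Finite := h.subset horb
  have hpos : 0 < (MulAction.orbit (ConjAct G) g).ncard :=
    (Set.ncard_pos hfin).mpr (MulAction.nonempty_orbit g)
  omega

/-- A finitely generated subgroup `L` of a group `G`, all of whose elements have finite
conjugacy class in `G`, is virtually abelian: it contains an abelian subgroup of finite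
index in `L`. -/
theorem fg_subgroup_of_fc_elements_virtually_abelian
    {G : Type*} [Group G] (L : Subgroup G) (hfg : Group.FG L)
    (hfc : ∀ g ∈ L, Set.Finite {h : G | ∃ x : G, x * g * x⁻¹ = h}) :
    ∃ A : Subgroup L, A.FiniteIndex ∧ ∀ a ∈ A, ∀ b ∈ A, a * b = b * a := by
  obtain ⟨T, hT, hTfin⟩ := Group.fg_iff.mp hfg
  haveI : Finite T := hTfin
  set C : Subgroup G := ⨅ t : T, Subgroup.centralizer {(t : G)} with hC
  haveI hCfi : C.FiniteIndex :=
    Subgroup.finiteIndex_iInf fun t =>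
      centralizer_finiteIndex_of_fc (t : G) (hfc _ (t : L).2)
  refine ⟨C.comap L.subtype, ?_, ?_⟩
  · constructor
    rw [Subgroup.index_comap]
    intro h0
    exact hCfi.index_ne_zero (Subgroup.index_eq_zero_of_relIndex_eq_zero h0)
  · intro a ha b hb
    have key : ∀ c : L, (c : G) ∈ C → ∀ d : L, (c : G) * (d : G) = (d : G) * (c : G) := by
      intro c hc d
      have hd : (d : G) ∈ Subgroup.centralizer {(c : G)} := by
        have : (d : G) ∈ Subgroup.map L.subtype (Subgroup.closure T) := ⟨d, by rw [hT]; trivial, rfl⟩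
        rw [MonoidHom.map_closure] at this
        refine Subgroup.closure_le _ |>.2 ?_ this
        rintro - ⟨t, ht, rfl⟩
        show (t : G) ∈ Subgroup.centralizer {(c : G)}
        rw [Subgroup.mem_centralizer_iff]
        rintro - rfl
        have := (Subgroup.mem_iInf.mp hc ⟨t, ht⟩)
        simpa [Subgroup.mem_centralizer_iff, eq_comm] using this
      simpa [Subgroup.mem_centralizer_iff] using hd
    have := key a ha b
    exact Subtype.ext this
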